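/- If X is a consistent random variable on [-1,1], then E[|X|] ≤ (E[X])^{1/2}. -/

import Mathlib

open MeasureTheory

theorem stmt8 {Ω : Type*} [MeasurableSpace Ω] (μ : Measure Ω)
    [IsProbabilityMeasure μ] (X : Ω → ℝ) (hX : Measurable X)
    (hrange : ∀ ω, X ω ∈ Set.Icc (-1 : ℝ) 1)
    (hcons : ∀ f : ℝ → ℝ, Measurable f → (∃ C, ∀ x, |f x| ≤ C) →
      ∫ ω, f (-(X ω)) ∂μ = ∫ ω, (1 - X ω) / (1 + X ω) * f (X ω) ∂μ) :
    ∫ ω, |X ω| ∂μ ≤ Real.sqrt (∫ ω, X ω ∂μ) := by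
  -- clamp function
  set c : ℝ → ℝ := fun x => max (-1) (min 1 x) with hc
  have hcm : Measurable c := measurable_const.max (measurable_const.min measurable_id)
  have hcb : ∀ x, |c x| ≤ 1 := fun x =>
    abs_le.2 ⟨le_max_left _ _, max_le (by norm_num) (min_le_left _ _)⟩
  have hcid : ∀ x ∈ Set.Icc (-1:ℝ) 1, c x = x := by
    intro x hx
    simp only [hc, min_eq_right hx.2, max_eq_right hx.1]
  have hXr : ∀ ω, c (X ω) = X ω := fun ω => hcid _ (hrange ω)
  have hXr' : ∀ ω, c (-(X ω)) = -(X ω) := by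
    intro ω
    exact hcid _ ⟨by linarith [(hrange ω).2], by linarith [(hrange ω).1]⟩
  -- integrability of bounded measurable functions
  have int_of_bdd : ∀ (g : Ω → ℝ), Measurable g → (∀ ω, |g ω| ≤ 2) → Integrable g μ := by
    intro g hg hb
    exact ⟨hg.aestronglyMeasurable, HasFiniteIntegral.of_bounded (C := 2)
      (Filter.Eventually.of_forall (fun ω => by simpa using hb ω))⟩
  have hX1 : ∀ ω, -1 ≤ X ω := fun ω => (hrange ω).1
  have hX2 : ∀ ω, X ω ≤ 1 := fun ω => (hrange ω).2
  have hXint : Integrable X μ := int_of_bdd X hX (fun ω => by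
    rw [abs_le]; constructor <;> [linarith [hX1 ω]; linarith [hX2 ω]])
  have hXsqint : Integrable (fun ω => X ω ^ 2) μ := int_of_bdd _ (hX.pow_const 2)
    (fun ω => by rw [abs_le]; constructor <;> nlinarith [hX1 ω, hX2 ω])
  have hXabsint : Integrable (fun ω => |X ω|) μ := hXint.abs
  -- Step 1: μ {X = -1} = 0
  set s : Set Ω := {ω | X ω = -1} with hs
  have hsm : MeasurableSet s := hX (measurableSet_singleton (-1))
  have h1 := hcons (fun x => 1 + c x) (measurable_const.add hcm)
    ⟨2, fun x => by
      have := abs_le.1 (hcb x)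
      show |1 + c x| ≤ 2
      rw [abs_le]; constructor <;> linarith⟩
  have e1 : ∀ ω, (1 - X ω) / (1 + X ω) * (1 + c (X ω))
      = (1 - X ω) - s.indicator (fun _ => (2:ℝ)) ω := by
    intro ω
    rw [hXr ω]
    by_cases h : X ω = -1
    · simp [Set.indicator_of_mem, hs, h]; norm_num
    · rw [Set.indicator_of_notMem (by simpa [hs] using h)]
      have h' : 1 + X ω ≠ 0 := fun hh => h (by linarith)
      field_simp
      ring
  have h1' : ∫ ω, (1 - X ω) ∂μ
      = ∫ ω, ((1 - X ω) - s.indicator (fun _ => (2:ℝ)) ω) ∂μ := by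
    calc ∫ ω, (1 - X ω) ∂μ = ∫ ω, (1 + c (-(X ω))) ∂μ := by
          congr 1; ext ω; rw [hXr' ω]; ring
      _ = ∫ ω, (1 - X ω) / (1 + X ω) * (1 + c (X ω)) ∂μ := h1
      _ = _ := by congr 1; ext ω; exact e1 ω
  have hindint : Integrable (s.indicator (fun _ => (2:ℝ))) μ :=
    (integrable_const (2:ℝ)).indicator hsm
  have h1sub : Integrable (fun ω => (1:ℝ) - X ω) μ := (integrable_const 1).sub hXint
  have hμs : μ s = 0 := by
    rw [integral_sub h1sub hindint] at h1'
    have : ∫ ω, s.indicator (fun _ => (2:ℝ)) ω ∂μ = 0 := by linarith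
    rw [integral_indicator_const _ hsm, smul_eq_mul] at this
    have h2 : (μ s).toReal = 0 := by show μ.real s = 0; linarith
    have := measure_ne_top μ s
    simpa [ENNReal.toReal_eq_zero_iff, this] using h2
  have haene : ∀ᵐ ω ∂μ, X ω ≠ -1 := by
    rw [ae_iff]; simpa [hs] using hμs
  -- Step 2: ∫ X² = ∫ X
  have h2 := hcons (fun x => c x * (1 + c x)) (hcm.mul (measurable_const.add hcm))
    ⟨2, fun x => by
      rw [abs_mul]
      have h1 := abs_le.1 (hcb x)
      have h2 : |1 + c x| ≤ 2 := abs_le.2 ⟨by linarith, by linarith⟩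
      calc |c x| * |1 + c x| ≤ 1 * 2 :=
            mul_le_mul (hcb x) h2 (abs_nonneg _) zero_le_one
        _ = 2 := by norm_num⟩
  have lhs2 : ∫ ω, c (-(X ω)) * (1 + c (-(X ω))) ∂μ = ∫ ω, (X ω ^ 2 - X ω) ∂μ := by
    congr 1; ext ω; rw [hXr' ω]; ring
  have rhs2 : ∫ ω, (1 - X ω) / (1 + X ω) * (c (X ω) * (1 + c (X ω))) ∂μ
      = ∫ ω, (X ω - X ω ^ 2) ∂μ := by
    apply integral_congr_ae
    filter_upwards [haene] with ω hω
    rw [hXr ω]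
    have h' : 1 + X ω ≠ 0 := fun hh => hω (by linarith)
    field_simp
  have key : ∫ ω, X ω ^ 2 ∂μ = ∫ ω, X ω ∂μ := by
    rw [lhs2, rhs2] at h2
    rw [integral_sub hXsqint hXint, integral_sub hXint hXsqint] at h2
    linarith
  -- Step 3: Cauchy–Schwarz-type bound
  set a : ℝ := ∫ ω, X ω ∂μ with ha
  have hann : 0 ≤ a := by
    rw [← key]
    exact integral_nonneg (fun ω => sq_nonneg _)
  rcases eq_or_lt_of_le hann with hz | hp
  · -- a = 0 : X = 0 a.e.
    have hsq0 : ∫ ω, X ω ^ 2 ∂μ = 0 := by rw [key, ← hz]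
    have : (fun ω => X ω ^ 2) =ᵐ[μ] 0 :=
      (integral_eq_zero_iff_of_nonneg (fun ω => sq_nonneg _) hXsqint).1 hsq0
    have habs0 : ∫ ω, |X ω| ∂μ = 0 := by
      rw [integral_eq_zero_iff_of_nonneg (fun ω => abs_nonneg _) hXabsint]
      filter_upwards [this] with ω hω
      have : X ω = 0 := by
        have := hω
        simpa [pow_eq_zero_iff] using hω
      simp [this]
    rw [habs0, ← hz]
    simp
  · -- a > 0 : use |x| ≤ (t² + x²)/(2t) with t = √a
    set t := Real.sqrt a with ht
    have htpos : 0 < t := Real.sqrt_pos.2 hp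
    have ptwise : ∀ ω, |X ω| ≤ (t ^ 2 + X ω ^ 2) / (2 * t) := by
      intro ω
      rw [le_div_iff₀ (by positivity : (0:ℝ) < 2 * t)]
      nlinarith [sq_nonneg (|X ω| - t), sq_abs (X ω)]
    calc ∫ ω, |X ω| ∂μ ≤ ∫ ω, (t ^ 2 + X ω ^ 2) / (2 * t) ∂μ := by
          apply integral_mono hXabsint _ ptwise
          exact ((integrable_const (t^2)).add hXsqint).div_const _
      _ = (t ^ 2 + a) / (2 * t) := by
          rw [integral_div, integral_add (integrable_const _) hXsqint, key,
            integral_const]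
          simp [ha]
      _ = t := by
          have hts : t ^ 2 = a := by rw [ht]; exact Real.sq_sqrt hann
          rw [← hts]
          field_simp
          ring
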